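/- Let X and Y be real normed spaces and let L : X → Y be a linear map whose range L(X) is finite-dimensional and nonzero. Let 𝒮_X : X → [0,∞) satisfy, for some κ > 0, 𝒮_X(αu + βv) ≤ κ(|α|𝒮_X(u) + |β|𝒮_X(v)) for all scalars α,β ∈ ℝ and all u,v ∈ X. Let 𝒮_Y : Y → [0,∞] be such that: 𝒮_Y is positively homogeneous on L(X) (𝒮_Y(λy) = λ𝒮_Y(y) for all λ > 0 and y ∈ L(X)); 𝒮_Y(y) > 0 for every nonzero y ∈ L(X); and the set {y ∈ L(X) : 𝒮_Y(y) = 1} is bounded with respect to the norm of Y. Then there exist a linear map L̃ : L(X) → X and a constant σ ∈ (0,∞) such that L(L̃(t)) = t for every t ∈ L(X) and 𝒮_X(L̃(y) − L̃(z)) ≤ κσ·𝒮_Y(y − z) for all y,z ∈ L(X); in particular, L has a Lipschitz continuous extended generalized inverse from (L(X),𝒮_Y) to (X,𝒮_X) with constant κσ. -/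

import Mathlib

set_option synthInstance.maxHeartbeats 1000000
set_option maxHeartbeats 1000000


/-- **Existence of a Lipschitz continuous linear extended generalized inverse.**
Let `L : X → Y` be a linear map between real normed spaces whose range is
finite-dimensional and nonzero, let `SX : X → [0, ∞)` satisfy a `κ`-quasi-triangle
inequality, and let `SY : Y → [0, ∞]` be positively homogeneous on the range of `L`,
positive on nonzero elements of the range, and have a norm-bounded unit "sphere" in the
range. Then there is a linear right inverse `Lt` of `L` on its range (in particular, an
extended generalized inverse) and a constant `σ > 0` such that `Lt` is `κσ`-Lipschitz
continuous from `(L(X), SY)` to `(X, SX)`. -/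
theorem exists_lipschitz_extended_generalized_inverse {X Y : Type*}
    [NormedAddCommGroup X] [NormedSpace ℝ X]
    [NormedAddCommGroup Y] [NormedSpace ℝ Y]
    (L : X →ₗ[ℝ] Y) [FiniteDimensional ℝ (LinearMap.range L)]
    (hne : LinearMap.range L ≠ ⊥)
    (SX : X → ℝ) (hSXnn : ∀ x : X, 0 ≤ SX x)
    (κ : ℝ) (hκ : 0 < κ)
    (hSX : ∀ (a b : ℝ) (u v : X), SX (a • u + b • v) ≤ κ * (|a| * SX u + |b| * SX v))
    (SY : Y → EReal) (hSYnn : ∀ y : Y, 0 ≤ SY y)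
    (hhom : ∀ lam : ℝ, 0 < lam → ∀ y ∈ LinearMap.range L, SY (lam • y) = (lam : EReal) * SY y)
    (hpos : ∀ y ∈ LinearMap.range L, y ≠ 0 → 0 < SY y)
    (hbdd : ∃ M : ℝ, ∀ y ∈ LinearMap.range L, SY y = 1 → ‖y‖ ≤ M) :
    ∃ (Lt : (LinearMap.range L) →ₗ[ℝ] X) (σ : ℝ), 0 < σ ∧
      (∀ t : LinearMap.range L, L (Lt t) = (t : Y)) ∧
      (∀ y z : LinearMap.range L,
        ((SX (Lt y - Lt z) : ℝ) : EReal) ≤ ((κ * σ : ℝ) : EReal) * SY ((y : Y) - (z : Y))) := by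
  classical
  obtain ⟨M, hM⟩ := hbdd
  set S := LinearMap.range L with hS
  set κ' := max κ 1 with hκ'def
  have hκ'1 : (1:ℝ) ≤ κ' := le_max_right _ _
  have hκ'pos : (0:ℝ) < κ' := lt_of_lt_of_le one_pos hκ'1
  have hSX0 : SX 0 = 0 := by
    have h := hSX 0 0 0 0
    simp at h
    exact le_antisymm h (hSXnn 0)
  have hSX' : ∀ (a b : ℝ) (u v : X), SX (a • u + b • v) ≤ κ' * (|a| * SX u + |b| * SX v) := by
    intro a b u v
    refine (hSX a b u v).trans (mul_le_mul_of_nonneg_right (le_max_left _ _) ?_)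
    exact add_nonneg (mul_nonneg (abs_nonneg _) (hSXnn u)) (mul_nonneg (abs_nonneg _) (hSXnn v))
  -- iterated quasi-triangle inequality
  have hsum : ∀ (ι : Type) (s : Finset ι) (c : ι → ℝ) (x : ι → X),
      SX (∑ i ∈ s, c i • x i) ≤ κ' ^ s.card * ∑ i ∈ s, |c i| * SX (x i) := by
    intro ι s
    induction s using Finset.cons_induction with
    | empty => intro c x; simp [hSX0]
    | cons a s ha ih =>
      intro c x
      rw [Finset.sum_cons, Finset.sum_cons, Finset.card_cons]
      have h1 : SX (c a • x a + (1:ℝ) • ∑ i ∈ s, c i • x i)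
          ≤ κ' * (|c a| * SX (x a) + |(1:ℝ)| * SX (∑ i ∈ s, c i • x i)) := hSX' _ _ _ _
      rw [one_smul, abs_one, one_mul] at h1
      have h2 := ih c x
      have hκn : (1:ℝ) ≤ κ' ^ s.card := one_le_pow₀ hκ'1
      have hA : 0 ≤ |c a| * SX (x a) := mul_nonneg (abs_nonneg _) (hSXnn _)
      have hB : 0 ≤ ∑ i ∈ s, |c i| * SX (x i) :=
        Finset.sum_nonneg fun i _ => mul_nonneg (abs_nonneg _) (hSXnn _)
      calc SX (c a • x a + ∑ i ∈ s, c i • x i)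
          ≤ κ' * (|c a| * SX (x a) + SX (∑ i ∈ s, c i • x i)) := h1
        _ ≤ κ' * (|c a| * SX (x a) + κ' ^ s.card * ∑ i ∈ s, |c i| * SX (x i)) := by
            gcongr
        _ ≤ κ' ^ (s.card + 1) * (|c a| * SX (x a) + ∑ i ∈ s, |c i| * SX (x i)) := by
            rw [pow_succ]
            nlinarith [mul_nonneg (mul_nonneg hκ'pos.le (sub_nonneg.mpr hκn)) hA]
  -- basis and lift
  let n := Module.finrank ℝ S
  let b : Module.Basis (Fin n) ℝ S := Module.finBasis ℝ S
  have hv : ∀ i : Fin n, ∃ x : X, L x = (b i : Y) := fun i => (b i).2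
  choose v hvL using hv
  let Lt : S →ₗ[ℝ] X := b.constr ℝ v
  have hright : ∀ t : S, L (Lt t) = (t : Y) := by
    have : L.comp Lt = S.subtype := by
      apply b.ext
      intro i
      simp [Lt, Module.Basis.constr_basis, hvL]
    intro t
    have := LinearMap.congr_fun this t
    simpa using this
  -- coordinate bounds
  let coordC : Fin n → (S →L[ℝ] ℝ) := fun i => LinearMap.toContinuousLinearMap (b.coord i)
  obtain ⟨K, hKnn, hK⟩ : ∃ K : ℝ, 0 ≤ K ∧ ∀ w : S, SX (Lt w) ≤ K * ‖w‖ := by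
    refine ⟨κ' ^ n * ∑ i : Fin n, ‖coordC i‖ * SX (v i), ?_, ?_⟩
    · apply mul_nonneg (by positivity)
      exact Finset.sum_nonneg fun i _ => mul_nonneg (ContinuousLinearMap.opNorm_nonneg _) (hSXnn _)
    intro w
    have hrepr : Lt w = ∑ i : Fin n, b.equivFun w i • v i := b.constr_apply_fintype ℝ v w
    rw [hrepr]
    have h1 := hsum (Fin n) Finset.univ (fun i => b.equivFun w i) v
    have h2 : ∑ i : Fin n, |b.equivFun w i| * SX (v i)
        ≤ ∑ i : Fin n, (‖coordC i‖ * ‖w‖) * SX (v i) := by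
      apply Finset.sum_le_sum
      intro i _
      apply mul_le_mul_of_nonneg_right _ (hSXnn _)
      have : b.equivFun w i = coordC i w := by
        simp [coordC, Module.Basis.equivFun_apply, Module.Basis.coord_apply]
      rw [this]
      exact (coordC i).le_opNorm w
    have hcard : (Finset.univ : Finset (Fin n)).card = n := by simp
    calc SX (∑ i : Fin n, b.equivFun w i • v i)
        ≤ κ' ^ n * ∑ i : Fin n, |b.equivFun w i| * SX (v i) := by simpa using h1
      _ ≤ κ' ^ n * ∑ i : Fin n, (‖coordC i‖ * ‖w‖) * SX (v i) := by
          apply mul_le_mul_of_nonneg_left h2 (by positivity)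
      _ = (κ' ^ n * ∑ i : Fin n, ‖coordC i‖ * SX (v i)) * ‖w‖ := by
          simp only [Finset.mul_sum, Finset.sum_mul]
          exact Finset.sum_congr rfl fun i _ => by ring
  set σ : ℝ := max (K * M) 1 with hσdef
  have hσpos : (0:ℝ) < σ := lt_of_lt_of_le one_pos (le_max_right _ _)
  have hκσpos : (0:ℝ) < κ * σ := mul_pos hκ hσpos
  refine ⟨Lt, σ, hσpos, hright, ?_⟩
  intro y z
  have hcoe : (y : Y) - (z : Y) = ((y - z : S) : Y) := rfl
  set d : S := y - z with hd
  have hdmem : (d : Y) ∈ S := d.2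
  have hLt : Lt y - Lt z = Lt d := (map_sub Lt y z).symm
  rw [hcoe, hLt]
  by_cases hd0 : d = 0
  · rw [hd0]
    simp only [map_zero, hSX0, ZeroMemClass.coe_zero]
    rw [show ((0:ℝ):EReal) = (0:EReal) by norm_num]
    apply mul_nonneg _ (hSYnn 0)
    exact_mod_cast hκσpos.le
  · have hdY : (d : Y) ≠ 0 := fun h => hd0 (Subtype.coe_injective h)
    have hSYpos : 0 < SY (d : Y) := hpos _ hdmem hdY
    by_cases htop : SY (d : Y) = ⊤
    · rw [htop]
      rw [EReal.mul_top_of_pos (by exact_mod_cast hκσpos)]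
      exact le_top
    · set lam : ℝ := (SY (d : Y)).toReal with hlam
      have hbot : SY (d : Y) ≠ ⊥ := ne_of_gt (lt_of_lt_of_le (by norm_num) (hSYnn _))
      have hlamcoe : ((lam : ℝ) : EReal) = SY (d : Y) := EReal.coe_toReal htop hbot
      have hlampos : 0 < lam := by
        have h0 : (0:EReal) < (lam : EReal) := by rw [hlamcoe]; exact hSYpos
        exact_mod_cast h0
      set d' : S := lam⁻¹ • d with hd'
      have hd'Y : (d' : Y) = lam⁻¹ • (d : Y) := rfl
      have hSYd' : SY (d' : Y) = 1 := by
        rw [hd'Y, hhom lam⁻¹ (inv_pos.mpr hlampos) _ hdmem, ← hlamcoe, ← EReal.coe_mul]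
        rw [inv_mul_cancel₀ hlampos.ne']
        norm_num
      have hnorm : ‖d'‖ ≤ M := by
        have := hM (d' : Y) d'.2 hSYd'
        simpa using this
      have hd'' : d = lam • d' := by
        rw [hd', smul_inv_smul₀ hlampos.ne']
      have hSXd' : SX (Lt d') ≤ K * M := by
        calc SX (Lt d') ≤ K * ‖d'‖ := hK d'
          _ ≤ K * M := mul_le_mul_of_nonneg_left hnorm hKnn
      have hfinal : SX (Lt d) ≤ κ * σ * lam := by
        rw [hd'', map_smul]
        have h := hSX lam 0 (Lt d') 0
        rw [zero_smul, add_zero, abs_zero, zero_mul, add_zero] at h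
        have hKM : K * M ≤ σ := le_max_left _ _
        calc SX (lam • Lt d') ≤ κ * (|lam| * SX (Lt d')) := h
          _ = κ * lam * SX (Lt d') := by rw [abs_of_pos hlampos]; ring
          _ ≤ κ * lam * (K * M) := by
              apply mul_le_mul_of_nonneg_left hSXd'
              positivity
          _ ≤ κ * σ * lam := by
              nlinarith [mul_le_mul_of_nonneg_left hKM (mul_pos hκ hlampos).le]
      rw [← hlamcoe, ← EReal.coe_mul]
      exact_mod_cast hfinal
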